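/- Let K be a field and let A = (A_1,…,A_m) be an m-tuple of strictly lower triangular 3×3 matrices over K. Then there exist indices 1 ≤ i, j ≤ m such that A_i and A_j generate the same associative subalgebra of n_3(K) as A_1,…,A_m do. -/

import Mathlib

open Matrix

/-- The `3×3` matrix unit `E_{ij}` (with `0`-indexed positions: `E_{21} = Eu 1 0`, etc.). -/
def Eu {K : Type*} [Field K] (i j : Fin 3) : Matrix (Fin 3) (Fin 3) K :=
  Matrix.single i j 1

/-- A `3×3` matrix is strictly lower triangular. -/
def StrictLower {K : Type*} [Field K] (X : Matrix (Fin 3) (Fin 3) K) : Prop :=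
  ∀ i j : Fin 3, i ≤ j → X i j = 0

lemma mulSL {K : Type*} [Field K] (X Y : Matrix (Fin 3) (Fin 3) K)
    (hX : StrictLower X) (hY : StrictLower Y) :
    X * Y = (X 2 1 * Y 1 0) • Eu 2 0 := by
  ext i j
  fin_cases i <;> fin_cases j <;>
    simp_all [Eu, Matrix.single, Matrix.mul_apply, Fin.sum_univ_three, StrictLower]

lemma comboE {K : Type*} [Field K] {X Y Z : Matrix (Fin 3) (Fin 3) K}
    (hX : StrictLower X) (hY : StrictLower Y) (hZ : StrictLower Z) (α β γ : K)
    (h1 : X 1 0 = α * Y 1 0 + β * Z 1 0)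
    (h2 : X 2 1 = α * Y 2 1 + β * Z 2 1)
    (h3 : X 2 0 = α * Y 2 0 + β * Z 2 0 + γ) :
    X = α • Y + β • Z + γ • Eu 2 0 := by
  ext r s
  fin_cases r <;> fin_cases s <;>
    simp_all [Eu, Matrix.single, StrictLower]

lemma combo2 {K : Type*} [Field K] {X Y Z : Matrix (Fin 3) (Fin 3) K}
    (hX : StrictLower X) (hY : StrictLower Y) (hZ : StrictLower Z) (α β : K)
    (h1 : X 1 0 = α * Y 1 0 + β * Z 1 0)
    (h2 : X 2 1 = α * Y 2 1 + β * Z 2 1)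
    (h3 : X 2 0 = α * Y 2 0 + β * Z 2 0) :
    X = α • Y + β • Z := by
  ext r s
  fin_cases r <;> fin_cases s <;>
    simp_all [Eu, Matrix.single, StrictLower]

lemma E20_mem {K : Type*} [Field K]
    {S : NonUnitalSubalgebra K (Matrix (Fin 3) (Fin 3) K)}
    {X Y : Matrix (Fin 3) (Fin 3) K}
    (hX : StrictLower X) (hY : StrictLower Y)
    (hXS : X ∈ S) (hYS : Y ∈ S) (h : X 2 1 * Y 1 0 ≠ 0) :
    (Eu 2 0 : Matrix (Fin 3) (Fin 3) K) ∈ S := by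
  have hm := mulSL X Y hX hY
  have he : (Eu 2 0 : Matrix (Fin 3) (Fin 3) K) = (X 2 1 * Y 1 0)⁻¹ • (X * Y) := by
    rw [hm, smul_smul, inv_mul_cancel₀ h, one_smul]
  rw [he]
  exact SMulMemClass.smul_mem _ (mul_mem hXS hYS)

/-- For any `m`-tuple of strictly lower triangular `3×3` matrices there are two
components generating the same (non-unital) associative subalgebra as the whole
tuple. -/
theorem two_generators_suffice {K : Type*} [Field K] {m : ℕ} (hm : 0 < m)
    (A : Fin m → Matrix (Fin 3) (Fin 3) K) (hA : ∀ i, StrictLower (A i)) :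
    ∃ i j : Fin m,
      NonUnitalAlgebra.adjoin K {A i, A j} = NonUnitalAlgebra.adjoin K (Set.range A) := by
  classical
  suffices h : ∃ i j : Fin m, ∀ k, A k ∈ NonUnitalAlgebra.adjoin K {A i, A j} by
    obtain ⟨i, j, h⟩ := h
    refine ⟨i, j, le_antisymm (NonUnitalAlgebra.adjoin_le ?_) (NonUnitalAlgebra.adjoin_le ?_)⟩
    · rintro x (rfl | rfl) <;> exact NonUnitalAlgebra.subset_adjoin K ⟨_, rfl⟩
    · rintro x ⟨k, rfl⟩; exact h k
  have memi : ∀ i j : Fin m, A i ∈ NonUnitalAlgebra.adjoin K {A i, A j} :=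
    fun i j => NonUnitalAlgebra.subset_adjoin K (Set.mem_insert _ _)
  have memj : ∀ i j : Fin m, A j ∈ NonUnitalAlgebra.adjoin K {A i, A j} :=
    fun i j => NonUnitalAlgebra.subset_adjoin K (Set.mem_insert_iff.2 (Or.inr rfl))
  have hE : StrictLower (Eu 2 0 : Matrix (Fin 3) (Fin 3) K) := by
    intro r s hrs
    fin_cases r <;> fin_cases s <;> simp_all [Eu, Matrix.single]
  by_cases hd : ∃ i j : Fin m, A i 1 0 * A j 2 1 - A j 1 0 * A i 2 1 ≠ 0
  · -- the (a,b)-projections span a 2-dimensional space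
    obtain ⟨i, j, hij⟩ := hd
    refine ⟨i, j, fun k => ?_⟩
    have hE20 : (Eu 2 0 : Matrix (Fin 3) (Fin 3) K) ∈ NonUnitalAlgebra.adjoin K {A i, A j} := by
      have hor : A i 1 0 * A j 2 1 ≠ 0 ∨ A j 1 0 * A i 2 1 ≠ 0 := by
        by_contra hcon
        push_neg at hcon
        simp [hcon.1, hcon.2] at hij
      rcases hor with hx | hx
      · exact E20_mem (hA j) (hA i) (memj i j) (memi i j) (by rw [mul_comm]; exact hx)
      · exact E20_mem (hA i) (hA j) (memi i j) (memj i j) (by rw [mul_comm]; exact hx)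
    set d := A i 1 0 * A j 2 1 - A j 1 0 * A i 2 1 with hdedf
    set α := (A k 1 0 * A j 2 1 - A k 2 1 * A j 1 0) / d with hα
    set β := (A i 1 0 * A k 2 1 - A i 2 1 * A k 1 0) / d with hβ
    have hcombo := comboE (hA k) (hA i) (hA j) α β
      (A k 2 0 - α * A i 2 0 - β * A j 2 0)
      (by rw [hα, hβ]; field_simp; ring)
      (by rw [hα, hβ]; field_simp; ring)
      (by ring)
    rw [hcombo]
    exact add_mem (add_mem (SMulMemClass.smul_mem _ (memi i j))
      (SMulMemClass.smul_mem _ (memj i j))) (SMulMemClass.smul_mem _ hE20)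
  · push_neg at hd
    -- all (a,b)-projections are pairwise proportional
    by_cases ha : ∃ i, A i 1 0 ≠ 0
    · obtain ⟨i, hi⟩ := ha
      by_cases hb : ∃ j, A j 2 1 ≠ 0
      · obtain ⟨j, hj⟩ := hb
        refine ⟨i, j, fun k => ?_⟩
        have hE20 : (Eu 2 0 : Matrix (Fin 3) (Fin 3) K) ∈
            NonUnitalAlgebra.adjoin K {A i, A j} :=
          E20_mem (hA j) (hA i) (memj i j) (memi i j) (mul_ne_zero hj hi)
        have hprop := hd k i
        have hcombo := comboE (hA k) (hA i) (hA j) (A k 1 0 / A i 1 0) 0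
          (A k 2 0 - A k 1 0 / A i 1 0 * A i 2 0)
          (by field_simp; ring)
          (by field_simp; first | linear_combination hprop | linear_combination -hprop)
          (by ring)
        rw [hcombo]
        exact add_mem (add_mem (SMulMemClass.smul_mem _ (memi i j))
          (SMulMemClass.smul_mem _ (memj i j))) (SMulMemClass.smul_mem _ hE20)
      · push_neg at hb
        -- all b's are zero; work with the (a,c)-coordinates
        by_cases hd2 : ∃ i j : Fin m, A i 1 0 * A j 2 0 - A j 1 0 * A i 2 0 ≠ 0
        · obtain ⟨i, j, hij⟩ := hd2
          refine ⟨i, j, fun k => ?_⟩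
          set d := A i 1 0 * A j 2 0 - A j 1 0 * A i 2 0 with hddef
          have hcombo := combo2 (hA k) (hA i) (hA j)
            ((A k 1 0 * A j 2 0 - A k 2 0 * A j 1 0) / d)
            ((A i 1 0 * A k 2 0 - A i 2 0 * A k 1 0) / d)
            (by field_simp; ring)
            (by simp [hb])
            (by field_simp; ring)
          rw [hcombo]
          exact add_mem (SMulMemClass.smul_mem _ (memi i j)) (SMulMemClass.smul_mem _ (memj i j))
        · push_neg at hd2
          refine ⟨i, i, fun k => ?_⟩
          have hprop := hd2 k i
          have hcombo := combo2 (hA k) (hA i) (hA i) (A k 1 0 / A i 1 0) 0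
            (by field_simp; ring)
            (by simp [hb])
            (by field_simp; first | linear_combination hprop | linear_combination -hprop)
          rw [hcombo]
          exact add_mem (SMulMemClass.smul_mem _ (memi i i)) (SMulMemClass.smul_mem _ (memj i i))
    · push_neg at ha
      -- all a's are zero; work with the (b,c)-coordinates
      by_cases hd2 : ∃ i j : Fin m, A i 2 1 * A j 2 0 - A j 2 1 * A i 2 0 ≠ 0
      · obtain ⟨i, j, hij⟩ := hd2
        refine ⟨i, j, fun k => ?_⟩
        set d := A i 2 1 * A j 2 0 - A j 2 1 * A i 2 0 with hddef
        have hcombo := combo2 (hA k) (hA i) (hA j)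
          ((A k 2 1 * A j 2 0 - A k 2 0 * A j 2 1) / d)
          ((A i 2 1 * A k 2 0 - A i 2 0 * A k 2 1) / d)
          (by simp [ha])
          (by field_simp; ring)
          (by field_simp; ring)
        rw [hcombo]
        exact add_mem (SMulMemClass.smul_mem _ (memi i j)) (SMulMemClass.smul_mem _ (memj i j))
      · push_neg at hd2
        by_cases hb : ∃ i, A i 2 1 ≠ 0
        · obtain ⟨i, hi⟩ := hb
          refine ⟨i, i, fun k => ?_⟩
          have hprop := hd2 k i
          have hcombo := combo2 (hA k) (hA i) (hA i) (A k 2 1 / A i 2 1) 0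
            (by simp [ha])
            (by field_simp; ring)
            (by field_simp; first | linear_combination hprop | linear_combination -hprop)
          rw [hcombo]
          exact add_mem (SMulMemClass.smul_mem _ (memi i i)) (SMulMemClass.smul_mem _ (memj i i))
        · push_neg at hb
          by_cases hc : ∃ i, A i 2 0 ≠ 0
          · obtain ⟨i, hi⟩ := hc
            refine ⟨i, i, fun k => ?_⟩
            have hcombo := combo2 (hA k) (hA i) (hA i) (A k 2 0 / A i 2 0) 0
              (by simp [ha])
              (by simp [hb])
              (by field_simp; ring)
            rw [hcombo]
            exact add_mem (SMulMemClass.smul_mem _ (memi i i)) (SMulMemClass.smul_mem _ (memj i i))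
          · push_neg at hc
            refine ⟨⟨0, hm⟩, ⟨0, hm⟩, fun k => ?_⟩
            have hz : A k = 0 := by
              ext r s
              rcases lt_or_ge r s with hrs | hrs
              · simpa using hA k r s hrs.le
              · fin_cases r <;> fin_cases s <;>
                  simp_all [StrictLower]
            rw [hz]
            exact zero_mem _
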